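/- arXiv:1210.4505 — 3 statements merged into one kernel-verified Lean document; each statement's English description precedes it below -/
import Mathlib

section
/- Let ν ≥ 1/2, w > 0, and let mmse be the canonical MMSE of an arbitrary discrete input with finite support and M[mmse;·] its Mellin transform. Then for every M ∈ ℕ, as snr → +∞, ∫₀^∞ g(t)·mmse(snr·t) dt = (ν^ν/(Γ(ν)·w^ν)) · ∑_{m=0}^{M} ((−1)^m·ν^m/(m!·w^m)) · M[mmse; 1+ν+m] · snr^{−1−ν−m} + O(snr^{−2−ν−M}), where g is the Nakagami fading kernel. (High-snr expansion of the average MMSE in a Nakagami fading coherent channel driven by a discrete input.) -/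
open MeasureTheory Filter Asymptotics Topology Real Finset
set_option linter.unusedSectionVars false
set_option maxHeartbeats 1000000

/-- Gaussian weight `exp(-|y - √s·x|²)`. -/
noncomputable def gaussWeight (s : ℝ) (x y : ℂ) : ℝ :=
  Real.exp (-(‖y - (Real.sqrt s : ℂ) * x‖) ^ 2)

/-- Conditional-mean estimator `X̂_s(y)` for a discrete input with points `x` and weights `p`. -/
noncomputable def condMean {K : ℕ} (x : Fin K → ℂ) (p : Fin K → ℝ) (s : ℝ) (y : ℂ) : ℂ :=
  (∑ j, (p j : ℂ) * x j * (gaussWeight s (x j) y : ℂ)) /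
    (∑ j, (p j : ℂ) * (gaussWeight s (x j) y : ℂ))

/-- Canonical MMSE of a discrete input with finite support in the AWGN channel. -/
noncomputable def discreteMMSE {K : ℕ} (x : Fin K → ℂ) (p : Fin K → ℝ) (s : ℝ) : ℝ :=
  ∑ i, p i * ∫ y : ℂ,
    (‖x i - condMean x p s y‖) ^ 2 * Real.pi⁻¹ * gaussWeight s (x i) y

/-- Real Mellin transform `M[f; z] = ∫₀^∞ t^{z-1} f(t) dt`. -/
noncomputable def mellinR (f : ℝ → ℝ) (z : ℝ) : ℝ :=
  ∫ t in Set.Ioi (0 : ℝ), t ^ (z - 1) * f t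

/-- Nakagami fading kernel `g(t) = (ν^ν/(Γ(ν)·w^ν))·t^ν·e^{-νt/w}`. -/
noncomputable def nakagamiKernel (ν w t : ℝ) : ℝ :=
  ν ^ ν / (Real.Gamma ν * w ^ ν) * t ^ ν * Real.exp (-(ν * t / w))

section AuxGauss

lemma gauss_prod_eq : (fun y : ℂ => Real.exp (-‖y‖ ^ 2))
      = fun y : ℂ => (fun p : ℝ × ℝ => Real.exp (-p.1 ^ 2) * Real.exp (-p.2 ^ 2))
          (Complex.measurableEquivRealProd y) := by
    funext y
    simp only [Complex.measurableEquivRealProd_apply, ← Real.exp_add]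
    congr 1
    rw [Complex.sq_norm, Complex.normSq_apply]; ring

lemma gauss_c_aux : ∫ y : ℂ, Real.exp (-‖y‖ ^ 2) = π := by
  have h2 := Complex.volume_preserving_equiv_real_prod.integral_comp
      Complex.measurableEquivRealProd.measurableEmbedding
      (fun p : ℝ × ℝ => Real.exp (-p.1 ^ 2) * Real.exp (-p.2 ^ 2))
  have h3 := integral_prod_mul (L := ℝ) (μ := (volume : Measure ℝ)) (ν := (volume : Measure ℝ))
      (fun x : ℝ => Real.exp (-x ^ 2)) (fun x : ℝ => Real.exp (-x ^ 2))
  rw [gauss_prod_eq, h2, Measure.volume_eq_prod, h3]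
  have := integral_gaussian 1
  simp only [neg_mul, one_mul] at this
  rw [this, div_one]
  exact Real.mul_self_sqrt Real.pi_pos.le

lemma gauss_c_int : Integrable (fun y : ℂ => Real.exp (-‖y‖ ^ 2)) := by
  rw [gauss_prod_eq]
  have g1 : Integrable (fun x : ℝ => Real.exp (-x ^ 2)) := by
    simpa using integrable_exp_neg_mul_sq (by norm_num : (0:ℝ) < 1)
  have g2 : Integrable (fun p : ℝ × ℝ => Real.exp (-p.1 ^ 2) * Real.exp (-p.2 ^ 2)) := by
    rw [Measure.volume_eq_prod]; exact g1.mul_prod g1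
  exact (Complex.volume_preserving_equiv_real_prod.integrable_comp_emb
      Complex.measurableEquivRealProd.measurableEmbedding).mpr g2

lemma gauss_c (c : ℂ) : ∫ y : ℂ, Real.exp (-‖y - c‖ ^ 2) = π := by
  rw [integral_sub_right_eq_self (fun y : ℂ => Real.exp (-‖y‖ ^ 2)) c]
  exact gauss_c_aux

lemma gauss_c_int' (c : ℂ) : Integrable (fun y : ℂ => Real.exp (-‖y - c‖ ^ 2)) := by
  have h := MeasurePreserving.integrable_comp_emb (f := fun y : ℂ => y - c)
      (g := fun y : ℂ => Real.exp (-‖y‖ ^ 2))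
      (measurePreserving_sub_right (volume : Measure ℂ) c)
      (MeasurableEquiv.subRight c).measurableEmbedding
  exact h.mpr gauss_c_int

end AuxGauss

section AuxTaylor


lemma sum_taylor_zero (k : ℕ) : ∑ m ∈ range (k+1), (-(0:ℝ))^m / m.factorial = 1 := by
  rw [Finset.sum_eq_single 0]
  · simp
  · intro b _ hb
    simp [zero_pow hb]
  · simp

lemma hasDeriv_taylor (n : ℕ) (t : ℝ) :
    HasDerivAt (fun u : ℝ => ∑ m ∈ range (n+2), (-u)^m / m.factorial)
      (-(∑ m ∈ range (n+1), (-t)^m / m.factorial)) t := by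
  have h : ∀ m ∈ range (n+2), HasDerivAt (fun u : ℝ => (-u)^m / m.factorial)
      ((m * (-t)^(m-1) * (-1)) / m.factorial) t := by
    intro m _
    exact (((hasDerivAt_id t).neg.pow m)).div_const _
  have hsum := HasDerivAt.fun_sum h
  refine hsum.congr_deriv (Eq.symm ?_)
  symm
  rw [Finset.sum_range_succ' (fun i => (i:ℝ) * (-t)^(i-1) * (-1) / (i.factorial : ℝ)) (n+1)]
  simp only [Nat.cast_zero, zero_mul, zero_div, add_zero]
  rw [← Finset.sum_neg_distrib]
  apply Finset.sum_congr rfl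
  intro k _
  have hf : (k.factorial : ℝ) ≠ 0 := by positivity
  rw [Nat.succ_sub_one, Nat.factorial_succ]
  push_cast
  field_simp

lemma expTaylorBound (n : ℕ) : ∀ x : ℝ, 0 ≤ x →
    |Real.exp (-x) - ∑ m ∈ range (n+1), (-x)^m / m.factorial| ≤ x^(n+1) / (n+1).factorial := by
  induction n with
  | zero =>
    intro x hx
    have h1 : Real.exp (-x) ≤ 1 := Real.exp_le_one_iff.mpr (by linarith)
    have h2 : 1 - x ≤ Real.exp (-x) := by linarith [Real.add_one_le_exp (-x)]
    rw [Finset.sum_range_one]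
    simp only [pow_zero, Nat.factorial_zero, Nat.cast_one, div_one, pow_one, Nat.factorial_one]
    rw [abs_sub_comm, abs_of_nonneg (by linarith)]
    have : x ^ (0+1) / (((0+1).factorial : ℕ) : ℝ) = x := by norm_num
    linarith
  | succ n ih =>
    intro x hx
    set F : ℝ → ℝ := fun u => Real.exp (-u) - ∑ m ∈ range (n+2), (-u)^m / m.factorial with hF
    set G : ℝ → ℝ := fun u => Real.exp (-u) - ∑ m ∈ range (n+1), (-u)^m / m.factorial with hG
    have hd : ∀ t ∈ Set.uIcc 0 x, HasDerivAt F (-(G t)) t := by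
      intro t _
      have h1 : HasDerivAt (fun u : ℝ => Real.exp (-u)) (-Real.exp (-t)) t := by
        simpa using ((hasDerivAt_id t).neg.exp)
      exact (h1.sub (hasDeriv_taylor n t)).congr_deriv (by simp [hG]; ring)
    have hGcont : Continuous G := by
      apply (Real.continuous_exp.comp continuous_neg).sub
      exact continuous_finset_sum _ (fun m _ => (continuous_neg.pow m).div_const _)
    have ftc : ∫ t in (0:ℝ)..x, -(G t) = F x - F 0 := by
      apply intervalIntegral.integral_eq_sub_of_hasDerivAt hd
      exact (hGcont.neg).intervalIntegrable _ _
    have hF0 : F 0 = 0 := by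
      show Real.exp (-0) - ∑ m ∈ range (n+2), (-(0:ℝ))^m / m.factorial = 0
      rw [sum_taylor_zero (n+1)]
      simp
    have hFx : F x = ∫ t in (0:ℝ)..x, -(G t) := by rw [ftc, hF0, sub_zero]
    calc |F x| = |∫ t in (0:ℝ)..x, -(G t)| := by rw [hFx]
      _ ≤ ∫ t in (0:ℝ)..x, |(-(G t))| :=
          intervalIntegral.abs_integral_le_integral_abs hx
      _ ≤ ∫ t in (0:ℝ)..x, t^(n+1) / (n+1).factorial := by
          apply intervalIntegral.integral_mono_on hx
          · exact ((hGcont.neg).abs).intervalIntegrable _ _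
          · exact ((continuous_pow (n+1)).div_const _).intervalIntegrable _ _
          · intro t ht
            rw [abs_neg]
            exact ih t ht.1
      _ = x^(n+2) / (n+2).factorial := by
          rw [intervalIntegral.integral_div, integral_pow]
          rw [Nat.factorial_succ (n+1)]
          push_cast
          field_simp
          simp

end AuxTaylor

lemma gw_pos (s : ℝ) (x y : ℂ) : 0 < gaussWeight s x y := Real.exp_pos _

lemma gw_le_one (s : ℝ) (x y : ℂ) : gaussWeight s x y ≤ 1 := by
  rw [gaussWeight]
  apply Real.exp_le_one_iff.mpr
  simp [sq_nonneg]

section ptwise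

variable {K : ℕ} (hK : 0 < K) (x : Fin K → ℂ) (p : Fin K → ℝ) (hp : ∀ j, 0 < p j)
include hK hp

lemma den_pos (s : ℝ) (y : ℂ) : 0 < ∑ j, p j * gaussWeight s (x j) y := by
  have : Nonempty (Fin K) := ⟨⟨0, hK⟩⟩
  exact Finset.sum_pos (fun j _ => mul_pos (hp j) (gw_pos _ _ _)) Finset.univ_nonempty

omit hK hp in
lemma den_complex (s : ℝ) (y : ℂ) :
    (∑ j, (p j : ℂ) * (gaussWeight s (x j) y : ℂ))
      = ((∑ j, p j * gaussWeight s (x j) y : ℝ) : ℂ) := by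
  push_cast
  rfl

lemma sub_condMean (i : Fin K) (s : ℝ) (y : ℂ) :
    x i - condMean x p s y
      = (∑ j, (p j : ℂ) * (gaussWeight s (x j) y : ℂ) * (x i - x j)) /
          ((∑ j, p j * gaussWeight s (x j) y : ℝ) : ℂ) := by
  have hS := den_pos hK x p hp s y
  have hSne : ((∑ j, p j * gaussWeight s (x j) y : ℝ) : ℂ) ≠ 0 := by
    exact_mod_cast Complex.ofReal_ne_zero.mpr hS.ne'
  rw [condMean, den_complex x p]
  rw [eq_div_iff hSne, sub_mul, div_mul_cancel₀ _ hSne]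
  rw [← den_complex x p, Finset.mul_sum, ← Finset.sum_sub_distrib]
  apply Finset.sum_congr rfl
  intro j _
  ring

lemma abs_sub_condMean (i : Fin K) (s : ℝ) (y : ℂ) :
    ‖x i - condMean x p s y‖
      ≤ (∑ j, p j * gaussWeight s (x j) y * ‖x i - x j‖) /
          (∑ j, p j * gaussWeight s (x j) y) := by
  have hS := den_pos hK x p hp s y
  rw [sub_condMean hK x p hp i s y, norm_div, Complex.norm_real, Real.norm_eq_abs, abs_of_pos hS]
  apply (div_le_div_iff_of_pos_right hS).mpr
  refine (norm_sum_le _ _).trans ?_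
  apply le_of_eq
  apply Finset.sum_congr rfl
  intro j _
  rw [norm_mul, norm_mul, Complex.norm_real, Complex.norm_real, Real.norm_eq_abs, Real.norm_eq_abs,
    abs_of_pos (hp j), abs_of_pos (gw_pos s (x j) y)]

omit hK hp in
lemma par_id (a b : ℂ) : ‖a+b‖^2 + ‖a-b‖^2
    = 2*‖a‖^2 + 2*‖b‖^2 := by
  simp only [Complex.sq_norm, Complex.normSq_apply, Complex.add_re, Complex.add_im,
    Complex.sub_re, Complex.sub_im]
  ring

omit hK hp in
lemma gw_mul {s : ℝ} (hs : 0 ≤ s) (u v y : ℂ) :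
    Real.sqrt (gaussWeight s u y * gaussWeight s v y)
      = Real.exp (-(s * ‖u - v‖^2 / 4)) *
          Real.exp (-(‖y - (Real.sqrt s : ℂ) * ((u+v)/2)‖)^2) := by
  rw [gaussWeight, gaussWeight, ← Real.exp_add, ← Real.exp_half, ← Real.exp_add]
  congr 1
  have h := par_id (y - (Real.sqrt s:ℂ)*((u+v)/2)) ((Real.sqrt s:ℂ)*((u-v)/2))
  have e1 : (y - (Real.sqrt s:ℂ)*((u+v)/2)) + ((Real.sqrt s:ℂ)*((u-v)/2))
      = y - (Real.sqrt s:ℂ)*v := by ring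
  have e2 : (y - (Real.sqrt s:ℂ)*((u+v)/2)) - ((Real.sqrt s:ℂ)*((u-v)/2))
      = y - (Real.sqrt s:ℂ)*u := by ring
  rw [e1, e2] at h
  have e3 : ‖(Real.sqrt s:ℂ)*((u-v)/2)‖^2 = s * ‖u-v‖^2/4 := by
    rw [norm_mul, norm_div, mul_pow, div_pow, Complex.norm_real, Real.norm_eq_abs,
      abs_of_nonneg (Real.sqrt_nonneg s), Real.sq_sqrt hs]
    norm_num
    ring
  rw [e3] at h
  linarith

lemma sq_abs_sub_condMean (i : Fin K) (s : ℝ) (y : ℂ) :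
    ‖x i - condMean x p s y‖ ^ 2
      ≤ (∑ j, p j * gaussWeight s (x j) y * ‖x i - x j‖^2) /
          (∑ j, p j * gaussWeight s (x j) y) := by
  have hS := den_pos hK x p hp s y
  have habs := abs_sub_condMean hK x p hp i s y
  have hCS : (∑ j, p j * gaussWeight s (x j) y * ‖x i - x j‖)^2
      ≤ (∑ j, p j * gaussWeight s (x j) y) *
        (∑ j, p j * gaussWeight s (x j) y * ‖x i - x j‖^2) := by
    have h := Finset.sum_mul_sq_le_sq_mul_sq Finset.univ
      (fun j => Real.sqrt (p j * gaussWeight s (x j) y))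
      (fun j => Real.sqrt (p j * gaussWeight s (x j) y) * ‖x i - x j‖)
    have e1 : ∀ j : Fin K, Real.sqrt (p j * gaussWeight s (x j) y) *
        (Real.sqrt (p j * gaussWeight s (x j) y) * ‖x i - x j‖)
        = p j * gaussWeight s (x j) y * ‖x i - x j‖ := by
      intro j
      rw [← mul_assoc, Real.mul_self_sqrt (mul_nonneg (hp j).le (gw_pos _ _ _).le)]
    have e2 : ∀ j : Fin K, Real.sqrt (p j * gaussWeight s (x j) y) ^ 2
        = p j * gaussWeight s (x j) y := fun j => Real.sq_sqrt (mul_nonneg (hp j).le (gw_pos _ _ _).le)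
    have e3 : ∀ j : Fin K, (Real.sqrt (p j * gaussWeight s (x j) y) * ‖x i - x j‖)^2
        = p j * gaussWeight s (x j) y * ‖x i - x j‖^2 := by
      intro j
      rw [mul_pow, e2 j]
    simp only [e1, e3] at h
    simpa only [e2] using h
  have h0 : (0:ℝ) ≤ ‖x i - condMean x p s y‖ := norm_nonneg _
  calc ‖x i - condMean x p s y‖ ^ 2
      ≤ ((∑ j, p j * gaussWeight s (x j) y * ‖x i - x j‖) /
          (∑ j, p j * gaussWeight s (x j) y))^2 := by
        apply pow_le_pow_left₀ h0 habs
    _ ≤ _ := by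
        rw [div_pow, div_le_div_iff₀ (by positivity) hS]
        calc (∑ j, p j * gaussWeight s (x j) y * ‖x i - x j‖)^2 *
              (∑ j, p j * gaussWeight s (x j) y)
            ≤ ((∑ j, p j * gaussWeight s (x j) y) *
                (∑ j, p j * gaussWeight s (x j) y * ‖x i - x j‖^2)) *
              (∑ j, p j * gaussWeight s (x j) y) := by
              apply mul_le_mul_of_nonneg_right hCS hS.le
          _ = _ := by ring

lemma term_bound (i j : Fin K) (s : ℝ) (y : ℂ) :
    p j * gaussWeight s (x j) y * gaussWeight s (x i) y /
        (∑ k, p k * gaussWeight s (x k) y)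
      ≤ Real.sqrt (p j / p i) *
          Real.sqrt (gaussWeight s (x i) y * gaussWeight s (x j) y) := by
  have hS := den_pos hK x p hp s y
  set S := ∑ k, p k * gaussWeight s (x k) y with hSdef
  set Wi := gaussWeight s (x i) y with hWi
  set Wj := gaussWeight s (x j) y with hWj
  have hWi0 : 0 < Wi := gw_pos _ _ _
  have hWj0 : 0 < Wj := gw_pos _ _ _
  have hib : p i * Wi ≤ S := Finset.single_le_sum
    (f := fun k => p k * gaussWeight s (x k) y)
    (fun k _ => mul_nonneg (hp k).le (gw_pos _ _ _).le) (Finset.mem_univ i)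
  have hjb : p j * Wj ≤ S := Finset.single_le_sum
    (f := fun k => p k * gaussWeight s (x k) y)
    (fun k _ => mul_nonneg (hp k).le (gw_pos _ _ _).le) (Finset.mem_univ j)
  have hs2 : Real.sqrt (p i * Wi * (p j * Wj)) ≤ S := by
    have h4 : p i * Wi * (p j * Wj) ≤ ((p i * Wi + p j * Wj)/2)^2 := by
      nlinarith [sq_nonneg (p i * Wi - p j * Wj)]
    calc Real.sqrt (p i * Wi * (p j * Wj)) ≤ Real.sqrt (((p i * Wi + p j * Wj)/2)^2) :=
          Real.sqrt_le_sqrt h4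
      _ = (p i * Wi + p j * Wj)/2 := Real.sqrt_sq (by
          have := (hp i).le; have := (hp j).le; positivity)
      _ ≤ S := by linarith
  have heq : p j * Wj * Wi
      = Real.sqrt (p j / p i * (Wi * Wj)) * Real.sqrt (p i * Wi * (p j * Wj)) := by
    rw [← Real.sqrt_mul (by
      have h1 := (hp i).le; have h2 := (hp j).le
      positivity : (0:ℝ) ≤ p j / p i * (Wi * Wj))]
    rw [show p j / p i * (Wi * Wj) * (p i * Wi * (p j * Wj)) = (p j * Wj * Wi)^2 by
      field_simp [(hp i).ne']]
    exact (Real.sqrt_sq (by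
      have := (hp j).le
      positivity)).symm
  calc p j * Wj * Wi / S
      = Real.sqrt (p j / p i * (Wi * Wj)) * (Real.sqrt (p i * Wi * (p j * Wj)) / S) := by
        rw [heq]; ring
    _ ≤ Real.sqrt (p j / p i * (Wi * Wj)) * 1 := by
        apply mul_le_mul_of_nonneg_left _ (Real.sqrt_nonneg _)
        exact div_le_one_of_le₀ hs2 hS.le
    _ = Real.sqrt (p j / p i) * Real.sqrt (Wi * Wj) := by
        rw [mul_one, Real.sqrt_mul (div_nonneg (hp j).le (hp i).le)]

lemma ptwise_bound (i : Fin K) {s : ℝ} (hs : 0 ≤ s) (y : ℂ) :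
    ‖x i - condMean x p s y‖^2 * Real.pi⁻¹ * gaussWeight s (x i) y
      ≤ ∑ j, (‖x i - x j‖^2 * Real.sqrt (p j / p i) * Real.pi⁻¹ *
            Real.exp (-(s * ‖x i - x j‖^2 / 4))) *
          Real.exp (-(‖y - (Real.sqrt s : ℂ) * ((x i + x j)/2)‖)^2) := by
  have hS := den_pos hK x p hp s y
  have hWi : 0 < gaussWeight s (x i) y := gw_pos _ _ _
  have h1 := sq_abs_sub_condMean hK x p hp i s y
  calc ‖x i - condMean x p s y‖^2 * Real.pi⁻¹ * gaussWeight s (x i) y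
      ≤ ((∑ j, p j * gaussWeight s (x j) y * ‖x i - x j‖^2) /
          (∑ j, p j * gaussWeight s (x j) y)) * Real.pi⁻¹ * gaussWeight s (x i) y := by
        apply mul_le_mul_of_nonneg_right (mul_le_mul_of_nonneg_right h1 (by positivity)) hWi.le
    _ = ∑ j, (p j * gaussWeight s (x j) y * gaussWeight s (x i) y /
            (∑ k, p k * gaussWeight s (x k) y)) * (‖x i - x j‖^2 * Real.pi⁻¹) := by
        rw [Finset.sum_div, Finset.sum_mul, Finset.sum_mul]
        apply Finset.sum_congr rfl
        intro j _
        ring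
    _ ≤ ∑ j, (Real.sqrt (p j / p i) *
            Real.sqrt (gaussWeight s (x i) y * gaussWeight s (x j) y)) *
            (‖x i - x j‖^2 * Real.pi⁻¹) := by
        apply Finset.sum_le_sum
        intro j _
        apply mul_le_mul_of_nonneg_right (term_bound hK x p hp i j s y) (by positivity)
    _ = _ := by
        apply Finset.sum_congr rfl
        intro j _
        rw [gw_mul hs (x i) (x j) y]
        ring

omit hK hp in
lemma gw_cont (x0 : ℂ) : Continuous (fun q : ℝ × ℂ => gaussWeight q.1 x0 q.2) := by
  unfold gaussWeight
  apply Real.continuous_exp.comp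
  apply Continuous.neg
  apply Continuous.pow
  apply continuous_norm.comp
  exact continuous_snd.sub
    ((Complex.continuous_ofReal.comp (Real.continuous_sqrt.comp continuous_fst)).mul
      continuous_const)

lemma condMean_cont : Continuous (fun q : ℝ × ℂ => condMean x p q.1 q.2) := by
  unfold condMean
  apply Continuous.div
  · exact continuous_finset_sum _ fun j _ =>
      continuous_const.mul (Complex.continuous_ofReal.comp (gw_cont (x j)))
  · exact continuous_finset_sum _ fun j _ =>
      continuous_const.mul (Complex.continuous_ofReal.comp (gw_cont (x j)))
  · intro q
    rw [den_complex x p]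
    exact_mod_cast Complex.ofReal_ne_zero.mpr (den_pos hK x p hp q.1 q.2).ne'

lemma integrand_cont (i : Fin K) :
    Continuous (fun q : ℝ × ℂ =>
      ‖x i - condMean x p q.1 q.2‖^2 * Real.pi⁻¹ * gaussWeight q.1 (x i) q.2) :=
  (((continuous_norm.comp
    (continuous_const.sub (condMean_cont hK x p hp))).pow 2).mul continuous_const).mul
      (gw_cont (x i))

lemma bnd_integrable (i : Fin K) (s : ℝ) :
    Integrable (fun y : ℂ => ∑ j, (‖x i - x j‖^2 * Real.sqrt (p j / p i) *
        Real.pi⁻¹ * Real.exp (-(s * ‖x i - x j‖^2 / 4))) *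
        Real.exp (-(‖y - (Real.sqrt s : ℂ) * ((x i + x j)/2)‖)^2)) := by
  apply integrable_finset_sum
  intro j _
  exact (gauss_c_int' _).const_mul _

lemma integrand_integrable (i : Fin K) {s : ℝ} (hs : 0 ≤ s) :
    Integrable (fun y : ℂ =>
      ‖x i - condMean x p s y‖^2 * Real.pi⁻¹ * gaussWeight s (x i) y) := by
  apply Integrable.mono' (bnd_integrable hK x p hp i s)
  · exact ((integrand_cont hK x p hp i).comp
      (continuous_const.prodMk continuous_id)).aestronglyMeasurable
  · apply Filter.Eventually.of_forall
    intro y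
    rw [Real.norm_eq_abs, abs_of_nonneg
      (mul_nonneg (mul_nonneg (sq_nonneg _) (by positivity)) (gw_pos _ _ _).le)]
    exact ptwise_bound hK x p hp i hs y

lemma int_bound (i : Fin K) {s : ℝ} (hs : 0 ≤ s) :
    (∫ y : ℂ, ‖x i - condMean x p s y‖^2 * Real.pi⁻¹ * gaussWeight s (x i) y)
      ≤ ∑ j, ‖x i - x j‖^2 * Real.sqrt (p j / p i) *
          Real.exp (-(s * ‖x i - x j‖^2 / 4)) := by
  calc (∫ y : ℂ, ‖x i - condMean x p s y‖^2 * Real.pi⁻¹ * gaussWeight s (x i) y)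
      ≤ ∫ y : ℂ, ∑ j, (‖x i - x j‖^2 * Real.sqrt (p j / p i) *
          Real.pi⁻¹ * Real.exp (-(s * ‖x i - x j‖^2 / 4))) *
          Real.exp (-(‖y - (Real.sqrt s : ℂ) * ((x i + x j)/2)‖)^2) :=
        integral_mono (integrand_integrable hK x p hp i hs) (bnd_integrable hK x p hp i s)
          (fun y => ptwise_bound hK x p hp i hs y)
    _ = ∑ j, (‖x i - x j‖^2 * Real.sqrt (p j / p i) *
          Real.pi⁻¹ * Real.exp (-(s * ‖x i - x j‖^2 / 4))) * Real.pi := by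
        rw [integral_finset_sum _ (fun j _ => (gauss_c_int' _).const_mul _)]
        apply Finset.sum_congr rfl
        intro j _
        rw [integral_const_mul, gauss_c]
    _ = _ := by
        apply Finset.sum_congr rfl
        intro j _
        field_simp

lemma mmse_nonneg (s : ℝ) : 0 ≤ discreteMMSE x p s := by
  apply Finset.sum_nonneg
  intro i _
  apply mul_nonneg (hp i).le
  apply integral_nonneg
  intro y
  exact mul_nonneg (mul_nonneg (sq_nonneg _) (by positivity)) (gw_pos _ _ _).le

lemma mmse_meas : Measurable (discreteMMSE x p) := by
  unfold discreteMMSE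
  apply Finset.measurable_sum
  intro i _
  apply Measurable.const_mul
  exact ((integrand_cont hK x p hp i).stronglyMeasurable.integral_prod_right').measurable

lemma mmse_le {s : ℝ} (hs : 0 ≤ s) :
    discreteMMSE x p s ≤ ∑ i, ∑ j, (p i * (‖x i - x j‖^2 *
        Real.sqrt (p j / p i))) * Real.exp (-(s * ‖x i - x j‖^2 / 4)) := by
  rw [discreteMMSE]
  apply Finset.sum_le_sum
  intro i _
  calc p i * ∫ y : ℂ, ‖x i - condMean x p s y‖^2 * Real.pi⁻¹ *
        gaussWeight s (x i) y
      ≤ p i * ∑ j, ‖x i - x j‖^2 * Real.sqrt (p j / p i) *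
          Real.exp (-(s * ‖x i - x j‖^2 / 4)) :=
        mul_le_mul_of_nonneg_left (int_bound hK x p hp i hs) (hp i).le
    _ = _ := by
        rw [Finset.mul_sum]
        apply Finset.sum_congr rfl
        intro j _
        ring

lemma mmse_expbound (hx : Function.Injective x) :
    ∃ B κ : ℝ, 0 < κ ∧ 0 ≤ B ∧
      ∀ s : ℝ, 0 ≤ s → discreteMMSE x p s ≤ B * Real.exp (-(κ * s)) := by
  have hne : (Finset.univ : Finset (Fin K × Fin K)).Nonempty :=
    ⟨(⟨0, hK⟩, ⟨0, hK⟩), Finset.mem_univ _⟩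
  set g : Fin K × Fin K → ℝ := fun ij =>
    if ij.1 = ij.2 then 1 else ‖x ij.1 - x ij.2‖^2 / 4 with hg
  set κ := Finset.inf' Finset.univ hne g with hκ
  have hκpos : 0 < κ := by
    rw [hκ, Finset.lt_inf'_iff]
    intro ij _
    rw [hg]
    by_cases h : ij.1 = ij.2
    · simp [h]
    · simp only [h, if_false]
      have : x ij.1 ≠ x ij.2 := fun hc => h (hx hc)
      have : ‖x ij.1 - x ij.2‖ > 0 :=
        norm_pos_iff.mpr (sub_ne_zero.mpr this)
      positivity
  refine ⟨∑ i, ∑ j, p i * (‖x i - x j‖^2 * Real.sqrt (p j / p i)), κ,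
    hκpos, ?_, ?_⟩
  · apply Finset.sum_nonneg
    intro i _
    apply Finset.sum_nonneg
    intro j _
    have := (hp i).le
    positivity
  · intro s hs
    calc discreteMMSE x p s
        ≤ ∑ i, ∑ j, (p i * (‖x i - x j‖^2 * Real.sqrt (p j / p i))) *
            Real.exp (-(s * ‖x i - x j‖^2 / 4)) := mmse_le hK x p hp hs
      _ ≤ ∑ i, ∑ j, (p i * (‖x i - x j‖^2 * Real.sqrt (p j / p i))) *
            Real.exp (-(κ * s)) := by
          apply Finset.sum_le_sum
          intro i _
          apply Finset.sum_le_sum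
          intro j _
          by_cases h : i = j
          · subst h
            simp
          · apply mul_le_mul_of_nonneg_left ?_ (by
              have := (hp i).le
              positivity)
            apply Real.exp_le_exp.mpr
            have hinf : κ ≤ g (i, j) := Finset.inf'_le g (Finset.mem_univ (i, j))
            rw [hg] at hinf
            simp only [h, if_false] at hinf
            have : κ * s ≤ s * (‖x i - x j‖^2 / 4) := by
              calc κ * s ≤ (‖x i - x j‖^2 / 4) * s :=
                    mul_le_mul_of_nonneg_right hinf hs
                _ = s * (‖x i - x j‖^2 / 4) := by ring
            linarith
      _ = _ := by
          rw [Finset.sum_mul]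
          apply Finset.sum_congr rfl
          intro i _
          rw [Finset.sum_mul]

end ptwise


section MainAsymp

open Set

lemma mainAsymp (ν w : ℝ) (hν : 1 / 2 ≤ ν) (hw : 0 < w) (f : ℝ → ℝ)
    (hfm : Measurable f) (hf0 : ∀ s, 0 ≤ f s)
    (B κ : ℝ) (hκ : 0 < κ)
    (hfb : ∀ s : ℝ, 0 ≤ s → f s ≤ B * Real.exp (-(κ * s))) (M : ℕ) :
    (fun snr : ℝ =>
        (∫ t in Set.Ioi (0 : ℝ), nakagamiKernel ν w t * f (snr * t)) -
          ν ^ ν / (Real.Gamma ν * w ^ ν) *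
            ∑ m ∈ Finset.range (M + 1),
              (-1 : ℝ) ^ m * ν ^ m / ((m.factorial : ℝ) * w ^ m) *
                mellinR f (1 + ν + m) * snr ^ (-(1 : ℝ) - ν - m))
      =O[atTop] (fun snr : ℝ => snr ^ (-(2 : ℝ) - ν - M)) := by
  have hν0 : (0:ℝ) < ν := lt_of_lt_of_le (by norm_num) hν
  set Cν : ℝ := ν ^ ν / (Real.Gamma ν * w ^ ν) with hCν
  -- basic integrability
  have key_int : ∀ a : ℝ, 0 ≤ a → IntegrableOn (fun u => u ^ a * f u) (Set.Ioi 0) := by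
    intro a ha'
    have ha : (-1:ℝ) < a := by linarith
    have h0 : IntegrableOn (fun u : ℝ => u ^ a * Real.exp (-κ * u)) (Set.Ioi 0) := by
      have h1 := integrableOn_rpow_mul_exp_neg_mul_rpow ha one_pos hκ
      have : ∀ u : ℝ, u ^ a * Real.exp (-κ * u ^ (1:ℝ)) = u ^ a * Real.exp (-κ * u) := by
        intro u
        rw [Real.rpow_one]
      simpa only [this] using h1
    apply Integrable.mono' (h0.const_mul B)
    · exact ((Real.continuous_rpow_const ha').measurable.mul
        hfm).aestronglyMeasurable
    · filter_upwards [ae_restrict_mem measurableSet_Ioi] with u hu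
      have hu0 : (0:ℝ) < u := hu
      have h2 : f u ≤ B * Real.exp (-(κ * u)) := hfb u hu0.le
      have h3 : (0:ℝ) ≤ u ^ a := Real.rpow_nonneg hu0.le a
      rw [Real.norm_eq_abs, abs_of_nonneg (mul_nonneg h3 (hf0 u))]
      calc u ^ a * f u ≤ u ^ a * (B * Real.exp (-(κ * u))) :=
            mul_le_mul_of_nonneg_left h2 h3
        _ = B * (u ^ a * Real.exp (-κ * u)) := by rw [neg_mul]; ring
  -- nonnegativity of the moments
  have I_nonneg : ∀ a : ℝ, 0 ≤ ∫ u in Set.Ioi (0:ℝ), u ^ a * f u := by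
    intro a
    apply setIntegral_nonneg measurableSet_Ioi
    intro u hu
    exact mul_nonneg (Real.rpow_nonneg (le_of_lt hu) a) (hf0 u)
  have hmell : ∀ m : ℕ, mellinR f (1 + ν + m) = ∫ u in Set.Ioi (0:ℝ), u ^ (ν + (m:ℝ)) * f u := by
    intro m
    rw [mellinR]
    congr 1
    funext t
    rw [show 1 + ν + (m:ℝ) - 1 = ν + (m:ℝ) by ring]
  rw [Asymptotics.isBigO_iff]
  refine ⟨|Cν| * ((ν / w) ^ (M+1) / ((M+1).factorial : ℝ)) *
    (∫ u in Set.Ioi (0:ℝ), u ^ (ν + ((M:ℝ)+1)) * f u), ?_⟩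
  filter_upwards [eventually_ge_atTop (1:ℝ)] with snr hsnr
  have hs0 : (0:ℝ) < snr := lt_of_lt_of_le one_pos hsnr
  set lam : ℝ := ν / (w * snr) with hlam
  have hlam0 : 0 < lam := div_pos hν0 (mul_pos hw hs0)
  -- change of variables
  have e1 : (∫ t in Set.Ioi (0:ℝ), nakagamiKernel ν w t * f (snr * t))
      = snr⁻¹ * ∫ u in Set.Ioi (0:ℝ), nakagamiKernel ν w (u / snr) * f u := by
    have h := integral_comp_mul_left_Ioi (fun u => nakagamiKernel ν w (u / snr) * f u) 0 hs0
    rw [mul_zero, smul_eq_mul] at h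
    rw [← h]
    apply setIntegral_congr_fun measurableSet_Ioi
    intro t _
    simp only []
    rw [mul_div_cancel_left₀ _ hs0.ne']
  -- kernel expansion
  have e2 : (∫ u in Set.Ioi (0:ℝ), nakagamiKernel ν w (u / snr) * f u)
      = Cν * snr ^ (-ν) * ∫ u in Set.Ioi (0:ℝ), u ^ ν * Real.exp (-(lam * u)) * f u := by
    rw [← integral_const_mul]
    apply setIntegral_congr_fun measurableSet_Ioi
    intro u hu
    have hu0 : (0:ℝ) < u := hu
    simp only []
    rw [nakagamiKernel]
    have hr : (u / snr) ^ ν = u ^ ν * snr ^ (-ν) := by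
      rw [Real.div_rpow hu0.le hs0.le, Real.rpow_neg hs0.le, div_eq_mul_inv]
    have he : -(ν * (u / snr) / w) = -(lam * u) := by
      rw [hlam]
      field_simp
    rw [hr, he]
    ring
  set J : ℝ := ∫ u in Set.Ioi (0:ℝ), u ^ ν * Real.exp (-(lam * u)) * f u with hJ
  -- term functions
  set g : ℕ → ℝ → ℝ := fun m u => u ^ ν * f u * ((-(lam * u)) ^ m / (m.factorial : ℝ)) with hg
  have hg_int : ∀ m : ℕ, IntegrableOn (g m) (Set.Ioi 0) := by
    intro m
    apply IntegrableOn.congr_fun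
      (((key_int (ν + (m:ℝ)) (by
        have := hν0.le
        positivity)).const_mul
        ((-lam) ^ m / (m.factorial : ℝ))))
      ?_ measurableSet_Ioi
    intro u hu
    have hu0 : (0:ℝ) < u := hu
    rw [hg]
    simp only []
    rw [Real.rpow_add hu0, Real.rpow_natCast]
    have : (-(lam * u)) ^ m = (-lam) ^ m * u ^ m := by
      rw [show -(lam * u) = (-lam) * u by ring, mul_pow]
    rw [this]
    ring
  have hsum_eq : ∀ m ∈ Finset.range (M+1),
      (-1 : ℝ) ^ m * ν ^ m / ((m.factorial : ℝ) * w ^ m) *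
        mellinR f (1 + ν + m) * snr ^ (-(m:ℝ))
      = ∫ u in Set.Ioi (0:ℝ), g m u := by
    intro m _
    rw [hmell m, mul_right_comm, ← integral_const_mul]
    apply setIntegral_congr_fun measurableSet_Ioi
    intro u hu
    have hu0 : (0:ℝ) < u := hu
    rw [hg]
    simp only []
    rw [Real.rpow_add hu0, Real.rpow_natCast, Real.rpow_neg hs0.le, Real.rpow_natCast]
    have h1 : (-(lam * u)) ^ m = (-1) ^ m * lam ^ m * u ^ m := by
      rw [show -(lam * u) = (-1) * lam * u by ring, mul_pow, mul_pow]
    rw [h1, hlam, div_pow, mul_pow]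
    have hwne : w ^ m ≠ 0 := by positivity
    have hsne : snr ^ m ≠ 0 := by positivity
    have hfac : ((m.factorial : ℝ)) ≠ 0 := by positivity
    field_simp
  -- the remainder function
  set R : ℝ → ℝ := fun u => Real.exp (-(lam * u)) -
    ∑ m ∈ Finset.range (M+1), (-(lam * u)) ^ m / (m.factorial : ℝ) with hR
  have hJint : IntegrableOn (fun u => u ^ ν * Real.exp (-(lam * u)) * f u) (Set.Ioi 0) := by
    apply Integrable.mono' (key_int ν hν0.le)
    · apply Continuous.aestronglyMeasurable ?_ |>.mul hfm.aestronglyMeasurable |>.restrict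
      exact (Real.continuous_rpow_const hν0.le).mul
        (Real.continuous_exp.comp (continuous_const.mul continuous_id).neg)
    · filter_upwards [ae_restrict_mem measurableSet_Ioi] with u hu
      have hu0 : (0:ℝ) < u := hu
      have h1 : Real.exp (-(lam * u)) ≤ 1 := by
        apply Real.exp_le_one_iff.mpr
        nlinarith
      rw [Real.norm_eq_abs, abs_of_nonneg (mul_nonneg (mul_nonneg
        (Real.rpow_nonneg hu0.le ν) (Real.exp_nonneg _)) (hf0 u))]
      have h3 : (0:ℝ) ≤ u ^ ν := Real.rpow_nonneg hu0.le ν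
      nlinarith [hf0 u, mul_nonneg h3 (hf0 u)]
  have e5 : J - (∑ m ∈ Finset.range (M+1),
        (-1 : ℝ) ^ m * ν ^ m / ((m.factorial : ℝ) * w ^ m) *
          mellinR f (1 + ν + m) * snr ^ (-(m:ℝ)))
      = ∫ u in Set.Ioi (0:ℝ), u ^ ν * f u * R u := by
    rw [Finset.sum_congr rfl hsum_eq,
      ← integral_finset_sum _ (fun m _ => hg_int m), hJ, ← integral_sub hJint
        (integrable_finset_sum _ (fun m _ => hg_int m))]
    apply setIntegral_congr_fun measurableSet_Ioi
    intro u _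
    rw [hR, hg]
    simp only []
    rw [mul_sub, Finset.mul_sum]
    congr 1
    ring
  -- bound the remainder integral
  have hIlast := key_int (ν + ((M:ℝ)+1)) (by positivity)
  have hnormJ : ‖∫ u in Set.Ioi (0:ℝ), u ^ ν * f u * R u‖
      ≤ (lam ^ (M+1) / ((M+1).factorial : ℝ)) *
        ∫ u in Set.Ioi (0:ℝ), u ^ (ν + ((M:ℝ)+1)) * f u := by
    rw [← integral_const_mul]
    apply norm_integral_le_of_norm_le (hIlast.const_mul _)
    filter_upwards [ae_restrict_mem measurableSet_Ioi] with u hu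
    have hu0 : (0:ℝ) < u := hu
    have hTB := expTaylorBound M (lam * u) (by positivity)
    rw [Real.norm_eq_abs, abs_mul, abs_of_nonneg
      (mul_nonneg (Real.rpow_nonneg hu0.le ν) (hf0 u))]
    have hRb : |R u| ≤ (lam * u) ^ (M+1) / ((M+1).factorial : ℝ) := hTB
    calc u ^ ν * f u * |R u|
        ≤ u ^ ν * f u * ((lam * u) ^ (M+1) / ((M+1).factorial : ℝ)) :=
          mul_le_mul_of_nonneg_left hRb
            (mul_nonneg (Real.rpow_nonneg hu0.le ν) (hf0 u))
      _ = lam ^ (M+1) / ((M+1).factorial : ℝ) * (u ^ (ν + ((M:ℝ)+1)) * f u) := by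
          rw [show ν + ((M:ℝ)+1) = ν + ((M+1 : ℕ) : ℝ) by push_cast; ring,
            Real.rpow_add hu0, Real.rpow_natCast, mul_pow]
          ring
  -- assemble
  have hpow1 : snr⁻¹ * snr ^ (-ν) = snr ^ (-(1:ℝ) - ν) := by
    rw [show -(1:ℝ) - ν = (-1) + (-ν) by ring, Real.rpow_add hs0, Real.rpow_neg_one]
  have e3 : Cν * (∑ m ∈ Finset.range (M + 1),
        (-1 : ℝ) ^ m * ν ^ m / ((m.factorial : ℝ) * w ^ m) *
          mellinR f (1 + ν + m) * snr ^ (-(1 : ℝ) - ν - m))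
      = Cν * snr ^ (-(1:ℝ) - ν) * ∑ m ∈ Finset.range (M+1),
          (-1 : ℝ) ^ m * ν ^ m / ((m.factorial : ℝ) * w ^ m) *
            mellinR f (1 + ν + m) * snr ^ (-(m:ℝ)) := by
    have e3' : ∀ m ∈ Finset.range (M+1),
        (-1 : ℝ) ^ m * ν ^ m / ((m.factorial : ℝ) * w ^ m) *
          mellinR f (1 + ν + m) * snr ^ (-(1 : ℝ) - ν - m)
        = snr ^ (-(1:ℝ) - ν) * ((-1 : ℝ) ^ m * ν ^ m / ((m.factorial : ℝ) * w ^ m) *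
            mellinR f (1 + ν + m) * snr ^ (-(m:ℝ))) := by
      intro m _
      rw [show -(1:ℝ) - ν - m = (-(1:ℝ) - ν) + (-(m:ℝ)) by ring, Real.rpow_add hs0]
      ring
    rw [Finset.sum_congr rfl e3', ← Finset.mul_sum]
    ring
  have main_eq : (∫ t in Set.Ioi (0 : ℝ), nakagamiKernel ν w t * f (snr * t)) -
        Cν * ∑ m ∈ Finset.range (M + 1),
          (-1 : ℝ) ^ m * ν ^ m / ((m.factorial : ℝ) * w ^ m) *
            mellinR f (1 + ν + m) * snr ^ (-(1 : ℝ) - ν - m)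
      = Cν * snr ^ (-(1:ℝ) - ν) * ∫ u in Set.Ioi (0:ℝ), u ^ ν * f u * R u := by
    rw [e1, e2, e3, ← e5]
    rw [← hpow1]
    ring
  rw [main_eq]
  -- final numeric bound
  have hpos2 : (0:ℝ) < snr ^ (-(1:ℝ) - ν) := Real.rpow_pos_of_pos hs0 _
  have hlamp : lam ^ (M+1) = (ν / w) ^ (M+1) * (snr ^ (M+1))⁻¹ := by
    rw [hlam, show ν / (w * snr) = (ν / w) / snr by field_simp, div_pow, div_eq_mul_inv]
  have hpow2 : snr ^ (-(1:ℝ) - ν) * (snr ^ (M+1))⁻¹ = snr ^ (-(2:ℝ) - ν - M) := by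
    rw [show (snr ^ (M+1) : ℝ) = snr ^ ((M:ℝ)+1) by
        rw [← Real.rpow_natCast snr (M+1)]; push_cast; ring_nf,
      ← Real.rpow_neg hs0.le,
      ← Real.rpow_add hs0]
    congr 1
    ring
  rw [norm_mul, norm_mul, Real.norm_eq_abs, Real.norm_eq_abs,
    abs_of_pos hpos2]
  calc |Cν| * snr ^ (-(1:ℝ) - ν) * ‖∫ u in Set.Ioi (0:ℝ), u ^ ν * f u * R u‖
      ≤ |Cν| * snr ^ (-(1:ℝ) - ν) * ((lam ^ (M+1) / ((M+1).factorial : ℝ)) *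
          ∫ u in Set.Ioi (0:ℝ), u ^ (ν + ((M:ℝ)+1)) * f u) := by
        apply mul_le_mul_of_nonneg_left hnormJ (by positivity)
    _ = (|Cν| * ((ν / w) ^ (M+1) / ((M+1).factorial : ℝ)) *
          (∫ u in Set.Ioi (0:ℝ), u ^ (ν + ((M:ℝ)+1)) * f u)) *
          (snr ^ (-(1:ℝ) - ν) * (snr ^ (M+1))⁻¹) := by
        rw [hlamp]
        ring
    _ ≤ (|Cν| * ((ν / w) ^ (M+1) / ((M+1).factorial : ℝ)) *
          (∫ u in Set.Ioi (0:ℝ), u ^ (ν + ((M:ℝ)+1)) * f u)) *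
          ‖snr ^ (-(2:ℝ) - ν - (M:ℝ))‖ := by
        rw [hpow2, Real.norm_eq_abs,
          abs_of_pos (Real.rpow_pos_of_pos hs0 _)]

end MainAsymp

/-- High-snr expansion of the average MMSE in a Nakagami fading coherent channel
driven by an arbitrary discrete input with finite support. -/
theorem highSnr_avgMMSE_nakagami (ν w : ℝ) (hν : 1 / 2 ≤ ν) (hw : 0 < w)
    {K : ℕ} (hK : 0 < K) (x : Fin K → ℂ) (p : Fin K → ℝ)
    (hx : Function.Injective x) (hp : ∀ j, 0 < p j) (hsum : ∑ j, p j = 1)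
    (M : ℕ) :
    (fun snr : ℝ =>
        (∫ t in Set.Ioi (0 : ℝ), nakagamiKernel ν w t * discreteMMSE x p (snr * t)) -
          ν ^ ν / (Real.Gamma ν * w ^ ν) *
            ∑ m ∈ Finset.range (M + 1),
              (-1 : ℝ) ^ m * ν ^ m / ((m.factorial : ℝ) * w ^ m) *
                mellinR (discreteMMSE x p) (1 + ν + m) * snr ^ (-(1 : ℝ) - ν - m))
      =O[atTop] (fun snr : ℝ => snr ^ (-(2 : ℝ) - ν - M)) := by
  obtain ⟨B, κ, hκ, hB0, hbound⟩ := mmse_expbound hK x p hp hx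
  exact mainAsymp ν w hν hw (discreteMMSE x p) (mmse_meas hK x p hp)
    (mmse_nonneg hK x p hp) B κ hκ hbound M
end

section
/- For every z ∈ ℂ with Re z > −1 and every c ≥ 0, the integral ∫₀^∞ u^z·e^{−u}·I₀(2√(u·c)) du converges absolutely and equals ∑_{n=0}^∞ Γ(z+1+n)·c^n/(n!)², where I₀(x) = ∑_{n=0}^∞ (x/2)^{2n}/(n!)². Equivalently, ∫₀^∞ u^z·e^{−u}·I₀(2√(u·c)) du = Γ(z+1)·₁F₁(z+1; 1; c), where ₁F₁(a; 1; x) = ∑_{n=0}^∞ (Γ(a+n)/Γ(a))·x^n/(n!)². (Mellin transform identity underlying the Ricean fading kernel computations.) -/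
open MeasureTheory Filter Asymptotics Topology

noncomputable def besselI0 (x : ℝ) : ℝ :=
  ∑' n : ℕ, (x / 2) ^ (2 * n) / ((n.factorial : ℝ)) ^ 2

lemma summable_aux (x : ℝ) (hx : 0 ≤ x) :
    Summable (fun n : ℕ => x ^ n / ((n.factorial : ℝ)) ^ 2) := by
  refine Summable.of_nonneg_of_le (fun n => by positivity) (fun n => ?_)
    (Real.summable_pow_div_factorial x)
  apply div_le_div_of_nonneg_left ?_ ?_ ?_ |>.trans_eq rfl
  · positivity
  · positivity
  · exact_mod_cast Nat.le_self_pow two_ne_zero _ |>.trans_eq rfl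

lemma besselI0_eq (x : ℝ) (hx : 0 ≤ x) :
    besselI0 (2 * Real.sqrt x) = ∑' n : ℕ, x ^ n / ((n.factorial : ℝ)) ^ 2 := by
  unfold besselI0
  congr 1
  ext n
  rw [show (2 : ℝ) * Real.sqrt x / 2 = Real.sqrt x by ring, pow_mul, Real.sq_sqrt hx]

lemma summable_gamma (a : ℝ) (ha : 0 < a) (c : ℝ) (hc : 0 ≤ c) :
    Summable (fun n : ℕ => Real.Gamma (a + n) * c ^ n / ((n.factorial : ℝ)) ^ 2) := by
  refine summable_of_ratio_norm_eventually_le (r := 1/2) (by norm_num) ?_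
  filter_upwards [eventually_ge_atTop ⌈2 * (a + 1) * c⌉₊] with n hn
  have hG : 0 < Real.Gamma (a + n) := Real.Gamma_pos_of_pos (by positivity)
  have hkey : 2 * (a + n) * c ≤ ((n : ℝ) + 1) ^ 2 := by
    have h1 : 2 * (a + 1) * c ≤ (n : ℝ) := le_trans (Nat.le_ceil _) (by exact_mod_cast hn)
    nlinarith [sq_nonneg ((n:ℝ) - 1), mul_nonneg hc (Nat.cast_nonneg n), sq_nonneg (n:ℝ)]
  have hΓ : Real.Gamma (a + (n + 1 : ℕ)) = (a + n) * Real.Gamma (a + n) := by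
    push_cast
    rw [show a + ((n : ℝ) + 1) = (a + n) + 1 by ring, Real.Gamma_add_one (by positivity)]
  rw [Real.norm_of_nonneg (by positivity), Real.norm_of_nonneg (by positivity), hΓ,
    Nat.factorial_succ]
  push_cast
  rw [pow_succ, mul_pow]
  have hfac : (0:ℝ) < (n.factorial : ℝ) ^ 2 := by positivity
  have hcn : (0:ℝ) ≤ c ^ n := pow_nonneg hc n
  rw [← mul_div_assoc, div_le_div_iff₀ (by positivity) (by positivity)]
  nlinarith [mul_nonneg (mul_nonneg hG.le hcn) hfac.le, mul_le_mul_of_nonneg_left hkey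
    (mul_nonneg (mul_nonneg hG.le hcn) hfac.le)]

/-- Mellin-transform identity underlying the Ricean fading kernel computations:
`∫₀^∞ u^z e^{-u} I₀(2√(uc)) du = ∑ₙ Γ(z+1+n) cⁿ/(n!)² = Γ(z+1)·₁F₁(z+1; 1; c)`. -/
theorem mellin_exp_besselI0 (z : ℂ) (hz : -1 < z.re) (c : ℝ) (hc : 0 ≤ c) :
    IntegrableOn
      (fun u : ℝ => (u : ℂ) ^ z * ((Real.exp (-u) * besselI0 (2 * Real.sqrt (u * c)) : ℝ) : ℂ))
      (Set.Ioi 0) ∧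
    (∫ u in Set.Ioi (0 : ℝ),
        (u : ℂ) ^ z * ((Real.exp (-u) * besselI0 (2 * Real.sqrt (u * c)) : ℝ) : ℂ)) =
      (∑' n : ℕ, Complex.Gamma (z + 1 + n) * (c : ℂ) ^ n / ((n.factorial : ℂ)) ^ 2) ∧
    (∫ u in Set.Ioi (0 : ℝ),
        (u : ℂ) ^ z * ((Real.exp (-u) * besselI0 (2 * Real.sqrt (u * c)) : ℝ) : ℂ)) =
      Complex.Gamma (z + 1) *
        ∑' n : ℕ,
          Complex.Gamma (z + 1 + n) / Complex.Gamma (z + 1) * (c : ℂ) ^ n /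
            ((n.factorial : ℂ)) ^ 2 := by
  have ha : 0 < z.re + 1 := by linarith
  set f : ℝ → ℂ := fun u =>
    (u : ℂ) ^ z * ((Real.exp (-u) * besselI0 (2 * Real.sqrt (u * c)) : ℝ) : ℂ) with hfdef
  set F : ℕ → ℝ → ℂ := fun n u =>
    ((c ^ n / ((n.factorial : ℝ)) ^ 2 : ℝ) : ℂ) *
      (((Real.exp (-u) : ℝ) : ℂ) * (u : ℂ) ^ (z + 1 + n - 1)) with hFdef
  have hre : ∀ n : ℕ, 0 < (z + 1 + n).re := fun n => by
    simp [Complex.add_re]; positivity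
  -- integrability of each F n
  have hF_int : ∀ n : ℕ, IntegrableOn (F n) (Set.Ioi 0) := fun n =>
    (Complex.GammaIntegral_convergent (hre n)).const_mul _
  -- value of each integral
  have hF_val : ∀ n : ℕ, (∫ u in Set.Ioi (0:ℝ), F n u) =
      ((c ^ n / ((n.factorial : ℝ)) ^ 2 : ℝ) : ℂ) * Complex.Gamma (z + 1 + n) := by
    intro n
    simp only [hFdef]
    rw [integral_const_mul, Complex.Gamma_eq_integral (hre n)]
    rfl
  -- norm integrals
  have hF_norm : ∀ n : ℕ, (∫ u in Set.Ioi (0:ℝ), ‖F n u‖) =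
      Real.Gamma (z.re + 1 + n) * c ^ n / ((n.factorial : ℝ)) ^ 2 := by
    intro n
    have : ∀ u ∈ Set.Ioi (0:ℝ), ‖F n u‖ =
        (c ^ n / ((n.factorial : ℝ)) ^ 2) * (Real.exp (-u) * u ^ ((z.re + 1 + n) - 1)) := by
      intro u hu
      simp only [hFdef, norm_mul, Complex.norm_real,
        Complex.norm_cpow_eq_rpow_re_of_pos hu, Real.norm_eq_abs]
      rw [abs_of_nonneg (div_nonneg (pow_nonneg hc n) (by positivity)),
        abs_of_nonneg (Real.exp_pos _).le]
      congr 2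
    rw [setIntegral_congr_fun measurableSet_Ioi this, integral_const_mul,
      ← Real.Gamma_eq_integral (by positivity)]
    ring
  have hsum : Summable (fun n : ℕ => ∫ u in Set.Ioi (0:ℝ), ‖F n u‖) := by
    apply Summable.congr (summable_gamma (z.re + 1) ha c hc)
    intro n
    rw [hF_norm n]
  -- pointwise summability and tsum identity
  have hF_eq : ∀ u ∈ Set.Ioi (0:ℝ), ∀ n : ℕ, F n u =
      ((u : ℂ) ^ z * ((Real.exp (-u) : ℝ) : ℂ)) *
        (((u * c) ^ n / ((n.factorial : ℝ)) ^ 2 : ℝ) : ℂ) := by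
    intro u hu n
    simp only [hFdef]
    have h1 : (u : ℂ) ^ (z + 1 + n - 1) = (u : ℂ) ^ z * (u : ℂ) ^ (n : ℕ) := by
      rw [show z + 1 + (n : ℂ) - 1 = z + (n : ℕ) by ring,
        Complex.cpow_add _ _ (Complex.ofReal_ne_zero.mpr (ne_of_gt hu)),
        Complex.cpow_natCast]
    rw [h1]
    push_cast
    ring
  have hF_summable : ∀ u ∈ Set.Ioi (0:ℝ), Summable (fun n => F n u) := by
    intro u hu
    apply Summable.congr _ (fun n => (hF_eq u hu n).symm)
    apply Summable.mul_left
    exact_mod_cast (Complex.summable_ofReal).mpr (summable_aux (u * c)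
      (mul_nonneg (le_of_lt hu) hc))
  have hF_tsum : ∀ u ∈ Set.Ioi (0:ℝ), (∑' n, F n u) = f u := by
    intro u hu
    rw [tsum_congr (hF_eq u hu), tsum_mul_left, ← Complex.ofReal_tsum,
      ← besselI0_eq (u * c) (mul_nonneg (le_of_lt hu) hc), hfdef]
    push_cast
    ring
  -- integrability of f
  have hf_aesm : AEStronglyMeasurable f (volume.restrict (Set.Ioi 0)) := by
    refine aestronglyMeasurable_of_tendsto_ae atTop
      (f := fun N u => ∑ n ∈ Finset.range N, F n u)
      (fun N => Finset.aestronglyMeasurable_fun_sum _ fun n _ => (hF_int n).1) ?_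
    filter_upwards [ae_restrict_mem measurableSet_Ioi] with u hu
    have := ((hF_summable u hu).hasSum).tendsto_sum_nat
    rwa [hF_tsum u hu] at this
  have hnorm_summable : ∀ u ∈ Set.Ioi (0:ℝ), Summable (fun n => ‖F n u‖) := by
    intro u hu
    have : ∀ n : ℕ, ‖F n u‖ = ‖(u : ℂ) ^ z * ((Real.exp (-u) : ℝ) : ℂ)‖ *
        ((u * c) ^ n / ((n.factorial : ℝ)) ^ 2) := by
      intro n
      rw [hF_eq u hu n, norm_mul, Complex.norm_real, Real.norm_of_nonneg
        (div_nonneg (pow_nonneg (mul_nonneg (le_of_lt hu) hc) n) (by positivity))]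
    exact Summable.congr ((summable_aux (u * c) (mul_nonneg (le_of_lt hu) hc)).mul_left _)
      (fun n => (this n).symm)
  have hf_fin : HasFiniteIntegral f (volume.restrict (Set.Ioi 0)) := by
    rw [hasFiniteIntegral_iff_norm]
    calc ∫⁻ u, ENNReal.ofReal ‖f u‖ ∂(volume.restrict (Set.Ioi 0))
        ≤ ∫⁻ u, ∑' n, ENNReal.ofReal ‖F n u‖ ∂(volume.restrict (Set.Ioi 0)) := by
          refine lintegral_mono_ae ?_
          filter_upwards [ae_restrict_mem measurableSet_Ioi] with u hu
          rw [← ENNReal.ofReal_tsum_of_nonneg (fun n => norm_nonneg _) (hnorm_summable u hu)]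
          apply ENNReal.ofReal_le_ofReal
          rw [← hF_tsum u hu]
          exact norm_tsum_le_tsum_norm (hnorm_summable u hu)
      _ = ∑' n, ∫⁻ u, ENNReal.ofReal ‖F n u‖ ∂(volume.restrict (Set.Ioi 0)) := by
          refine lintegral_tsum fun n => ?_
          exact ((hF_int n).1.norm.aemeasurable).ennreal_ofReal
      _ = ∑' n, ENNReal.ofReal (∫ u in Set.Ioi (0:ℝ), ‖F n u‖) := by
          refine tsum_congr fun n => ?_
          rw [MeasureTheory.ofReal_integral_eq_lintegral_ofReal (hF_int n).norm
            (Filter.Eventually.of_forall fun u => norm_nonneg _)]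
      _ = ENNReal.ofReal (∑' n, ∫ u in Set.Ioi (0:ℝ), ‖F n u‖) := by
          rw [ENNReal.ofReal_tsum_of_nonneg
            (fun n => integral_nonneg fun u => norm_nonneg _) hsum]
      _ < ⊤ := ENNReal.ofReal_lt_top
  have hf_int : IntegrableOn f (Set.Ioi 0) := ⟨hf_aesm, hf_fin⟩
  -- the sum identity
  have hHasSum := MeasureTheory.hasSum_integral_of_summable_integral_norm hF_int hsum
  have hInt_eq : (∫ u in Set.Ioi (0:ℝ), ∑' n, F n u) = ∫ u in Set.Ioi (0:ℝ), f u :=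
    setIntegral_congr_fun measurableSet_Ioi hF_tsum
  have hmain : (∫ u in Set.Ioi (0:ℝ), f u) =
      ∑' n : ℕ, Complex.Gamma (z + 1 + n) * (c : ℂ) ^ n / ((n.factorial : ℂ)) ^ 2 := by
    rw [← hInt_eq, ← hHasSum.tsum_eq]
    refine tsum_congr fun n => ?_
    rw [hF_val n]
    push_cast
    ring
  refine ⟨hf_int, hmain, ?_⟩
  rw [hmain, ← tsum_mul_left]
  refine tsum_congr fun n => ?_
  have hΓ : Complex.Gamma (z + 1) ≠ 0 := Complex.Gamma_ne_zero_of_re_pos (by simpa using ha)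
  field_simp
end

section
/- Let τ > 0, ε > 0, s₀ > 0, and let p, λ : ℝ → ℝ satisfy: λ(s) > 0 and ε ≤ p(s) ≤ 1/ε for all s > s₀; the function s ↦ λ(s)·s − τ/p(s)² is O(1/s) as s → +∞; and the function s ↦ 1/(λ(s)·s) is O(1) as s → +∞. Then p(s) = √(τ/(λ(s)·s)) + O(1/s) as s → +∞. (Asymptotic form of the optimal power allocation: together with the KKT condition snr·avgmmse_i(snr·p_i) = λ, this yields the high-snr power allocation p_i* = √(e^{−|μ_i|²/(2σ_i²)}·M[mmse_i;2]/(2σ_i²·λ·snr)) + O(1/snr) maximizing the constrained capacity of a bank of parallel independent Rayleigh/Ricean fading coherent channels driven by discrete inputs.) -/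
open Filter Asymptotics

/-- Asymptotic form of the optimal power allocation: if `ε ≤ p(s) ≤ 1/ε` and `λ(s) > 0`
beyond `s₀`, `λ(s)·s − τ/p(s)² = O(1/s)` and `1/(λ(s)·s) = O(1)` as `s → +∞`, then
`p(s) = √(τ/(λ(s)·s)) + O(1/s)` as `s → +∞`. -/
theorem powerAllocation_asymptotics (τ ε s₀ : ℝ) (hτ : 0 < τ) (hε : 0 < ε) (hs₀ : 0 < s₀)
    (p lam : ℝ → ℝ)
    (hlam : ∀ s : ℝ, s₀ < s → 0 < lam s)
    (hbound : ∀ s : ℝ, s₀ < s → ε ≤ p s ∧ p s ≤ 1 / ε)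
    (h1 : (fun s : ℝ => lam s * s - τ / (p s) ^ 2) =O[atTop] fun s : ℝ => 1 / s)
    (h2 : (fun s : ℝ => 1 / (lam s * s)) =O[atTop] fun _ : ℝ => (1 : ℝ)) :
    (fun s : ℝ => p s - Real.sqrt (τ / (lam s * s))) =O[atTop] fun s : ℝ => 1 / s := by
  obtain ⟨C₁, hC₁pos, hC₁⟩ := h1.exists_pos
  obtain ⟨C₂, hC₂pos, hC₂⟩ := h2.exists_pos
  rw [IsBigOWith, eventually_atTop] at hC₁ hC₂
  obtain ⟨a₁, ha₁⟩ := hC₁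
  obtain ⟨a₂, ha₂⟩ := hC₂
  rw [isBigO_iff]
  refine ⟨C₁ * C₂ / ε ^ 3, ?_⟩
  rw [eventually_atTop]
  refine ⟨max (max a₁ a₂) (s₀ + 1), fun s hs => ?_⟩
  have hss : s₀ < s := lt_of_lt_of_le (by linarith) (le_trans (le_max_right _ _) hs)
  have hs0 : 0 < s := lt_trans hs₀ hss
  have hb1 := ha₁ s (le_trans (le_trans (le_max_left _ _) (le_max_left _ _)) hs)
  have hb2 := ha₂ s (le_trans (le_trans (le_max_right _ _) (le_max_left _ _)) hs)
  have hL : 0 < lam s * s := mul_pos (hlam s hss) hs0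
  obtain ⟨hpl, hpu⟩ := hbound s hss
  have hppos : 0 < p s := lt_of_lt_of_le hε hpl
  set q := Real.sqrt (τ / (lam s * s)) with hqdef
  have hqnn : 0 ≤ q := Real.sqrt_nonneg _
  have hq2 : q ^ 2 = τ / (lam s * s) := Real.sq_sqrt (div_nonneg hτ.le hL.le)
  -- key identity
  have hkey : p s ^ 2 - q ^ 2 = (p s ^ 2 / (lam s * s)) * (lam s * s - τ / (p s) ^ 2) := by
    rw [hq2]; field_simp; rw [sub_div, mul_right_comm (p s ^ 2) (lam s) s, mul_div_cancel_right₀ _ (hlam s hss).ne']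
  -- bounds
  have hinv : 1 / (lam s * s) ≤ C₂ := by
    have : |1 / (lam s * s)| ≤ C₂ * |(1 : ℝ)| := hb2
    rw [abs_one, mul_one] at this
    exact le_trans (le_abs_self _) this
  have hp2 : p s ^ 2 ≤ 1 / ε ^ 2 := by
    have : p s ^ 2 ≤ (1 / ε) ^ 2 := by
      apply pow_le_pow_left₀ hppos.le hpu
    simpa [div_pow] using this
  have hb1' : |lam s * s - τ / (p s) ^ 2| ≤ C₁ / s := by
    have := hb1
    simp only [Real.norm_eq_abs] at this
    rwa [abs_of_pos (by positivity : (0:ℝ) < 1 / s), ← div_eq_mul_one_div C₁ s] at this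
  have hsq : |p s ^ 2 - q ^ 2| ≤ C₂ / ε ^ 2 * (C₁ / s) := by
    rw [hkey, abs_mul]
    have h2' : |p s ^ 2 / (lam s * s)| ≤ C₂ / ε ^ 2 := by
      rw [abs_of_pos (by positivity)]
      rw [div_eq_mul_one_div]
      calc p s ^ 2 * (1 / (lam s * s)) ≤ (1 / ε ^ 2) * C₂ := by
            apply mul_le_mul hp2 hinv (by positivity) (by positivity)
        _ = C₂ / ε ^ 2 := by ring
    exact mul_le_mul h2' hb1' (abs_nonneg _) (by positivity)
  -- from square difference to difference
  have hsum : ε ≤ p s + q := by linarith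
  have hdiff : |p s - q| * ε ≤ |p s ^ 2 - q ^ 2| := by
    have : |p s ^ 2 - q ^ 2| = |p s - q| * (p s + q) := by
      rw [show p s ^ 2 - q ^ 2 = (p s - q) * (p s + q) by ring, abs_mul,
        abs_of_nonneg (by linarith : (0:ℝ) ≤ p s + q)]
    rw [this]
    exact mul_le_mul_of_nonneg_left hsum (abs_nonneg _)
  simp only [Real.norm_eq_abs]
  rw [abs_of_pos (by positivity : (0:ℝ) < 1 / s)]
  have : |p s - q| ≤ (C₂ / ε ^ 2 * (C₁ / s)) / ε := by
    rw [le_div_iff₀ hε]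
    exact le_trans hdiff hsq
  calc |p s - q| ≤ (C₂ / ε ^ 2 * (C₁ / s)) / ε := this
    _ = C₁ * C₂ / ε ^ 3 * (1 / s) := by ring
end
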